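/- arXiv:1508.03971 — 2 statements merged into one kernel-verified Lean document; each statement's English description precedes it below -/
import Mathlib

section
/- Let G₁ and G₂ be finite clique-Helly simple graphs, each having at least two vertices and no isolated vertices. Then their Cartesian product G₁ □ G₂ is K-periodic, i.e., Kⁿ(G₁ □ G₂) ≅ G₁ □ G₂ for some positive integer n. -/
open SimpleGraph

universe u v

/-- A clique (maximal complete subgraph) of `G`, viewed as a vertex set. -/
def IsMaxClique {V : Type u} (G : SimpleGraph V) (s : Set V) : Prop :=
  G.IsClique s ∧ ∀ t : Set V, G.IsClique t → s ⊆ t → s = t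

/-- The set of all cliques (maximal complete subgraphs) of `G`. -/
def maxCliques {V : Type u} (G : SimpleGraph V) : Set (Set V) :=
  {s | IsMaxClique G s}

/-- The clique graph `K(G)`: vertices are the cliques of `G`, two distinct cliques
being adjacent iff they intersect. -/
def cliqueGraph {V : Type u} (G : SimpleGraph V) : SimpleGraph ↥(maxCliques G) where
  Adj Q R := Q ≠ R ∧ ((Q : Set V) ∩ (R : Set V)).Nonempty
  symm := by
    constructor
    intro Q R h
    refine ⟨h.1.symm, ?_⟩
    rw [Set.inter_comm]
    exact h.2
  loopless := ⟨fun Q h => h.1 rfl⟩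

/-- A graph is complete iff any two distinct vertices are adjacent. -/
def IsCompleteGraph {V : Type u} (G : SimpleGraph V) : Prop :=
  ∀ x y : V, x ≠ y → G.Adj x y

/-- The join `G₁ + G₂` of two graphs on disjoint vertex sets: all edges of `G₁`
and of `G₂`, plus all edges between the two vertex sets. -/
def joinGraph {V₁ : Type u} {V₂ : Type v} (G₁ : SimpleGraph V₁) (G₂ : SimpleGraph V₂) :
    SimpleGraph (V₁ ⊕ V₂) where
  Adj x y :=
    match x, y with
    | Sum.inl a, Sum.inl b => G₁.Adj a b
    | Sum.inr a, Sum.inr b => G₂.Adj a b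
    | Sum.inl _, Sum.inr _ => True
    | Sum.inr _, Sum.inl _ => True
  symm := by constructor; rintro (a | a) (b | b) h <;> first | exact h.symm | trivial
  loopless := by constructor; rintro (a | a) h <;> exact (SimpleGraph.irrefl _) h

/-- A finite simple graph bundled with its vertex type. -/
structure BGraph : Type (u + 1) where
  V : Type u
  [finV : Finite V]
  graph : SimpleGraph V

attribute [instance] BGraph.finV

/-- Bundle a finite simple graph. -/
def BGraph.of {V : Type u} [Finite V] (G : SimpleGraph V) : BGraph.{u} :=
  { V := V, graph := G }

/-- The bundled clique graph operator `K`; iterated clique graphs are `KB^[n]`. -/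
def KB : BGraph.{u} → BGraph.{u} :=
  fun H => { V := ↥(maxCliques H.graph), graph := cliqueGraph H.graph }

/-- A graph is `K`-convergent if its sequence of iterated clique graphs is finite
up to isomorphism, i.e. two of its iterated clique graphs are isomorphic. -/
def KConvergent (H : BGraph.{u}) : Prop :=
  ∃ m n : ℕ, m < n ∧ Nonempty ((KB^[n] H).graph ≃g (KB^[m] H).graph)

/-- A graph is `K`-periodic if `Kⁿ(G) ≅ G` for some `n > 0`. -/
def KPeriodic (H : BGraph.{u}) : Prop :=
  ∃ n : ℕ, 0 < n ∧ Nonempty ((KB^[n] H).graph ≃g H.graph)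

/-- A graph is clique-Helly if every nonempty family of pairwise intersecting cliques
has nonempty total intersection. -/
def CliqueHelly {V : Type u} (G : SimpleGraph V) : Prop :=
  ∀ F : Set (Set V), F.Nonempty → (∀ s ∈ F, s ∈ maxCliques G) →
    (∀ s ∈ F, ∀ t ∈ F, (s ∩ t).Nonempty) → (⋂ s ∈ F, s).Nonempty

section Aux
variable {V : Type u} {G : SimpleGraph V}

lemma cliqueGraph_adj {Q R : ↥(maxCliques G)} :
    (cliqueGraph G).Adj Q R ↔ Q ≠ R ∧ ((Q : Set V) ∩ (R : Set V)).Nonempty := Iff.rfl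

lemma exists_max_supset [Finite V] {s : Set V} (hs : G.IsClique s) :
    ∃ t ∈ maxCliques G, s ⊆ t := by
  obtain ⟨t, ht, hmax⟩ := Set.Finite.exists_maximalFor id {t : Set V | G.IsClique t ∧ s ⊆ t}
    (Set.toFinite _) ⟨s, hs, subset_rfl⟩
  exact ⟨t, ⟨ht.1, fun t' ht' hsub => Set.Subset.antisymm hsub (hmax ⟨ht', ht.2.trans hsub⟩ hsub)⟩, ht.2⟩

lemma exists_maxClique_mem [Finite V] (x : V) : ∃ t ∈ maxCliques G, x ∈ t := by
  obtain ⟨t, ht, hsub⟩ := exists_max_supset (G := G) (s := {x}) (G.isClique_singleton x)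
  exact ⟨t, ht, hsub rfl⟩

lemma maxClique_nonempty [Nonempty V] {t : Set V} (ht : t ∈ maxCliques G) : t.Nonempty := by
  rcases t.eq_empty_or_nonempty with h | h
  · subst h
    obtain ⟨x⟩ := ‹Nonempty V›
    have h2 := ht.2 {x} (G.isClique_singleton x) (Set.empty_subset _)
    exact absurd h2.symm (Set.singleton_ne_empty x)
  · exact h

lemma maxClique_pair [Nonempty V] (hiso : ∀ v : V, ∃ u, G.Adj v u) {t : Set V}
    (ht : t ∈ maxCliques G) : ∃ a ∈ t, ∃ b ∈ t, a ≠ b := by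
  obtain ⟨a, ha⟩ := maxClique_nonempty ht
  by_cases hb : ∃ b ∈ t, b ≠ a
  · obtain ⟨b, hbt, hba⟩ := hb; exact ⟨a, ha, b, hbt, hba.symm⟩
  · push_neg at hb
    have hta : t = {a} := Set.eq_singleton_iff_unique_mem.2 ⟨ha, hb⟩
    obtain ⟨u, hu⟩ := hiso a
    have hcl : G.IsClique {a, u} := SimpleGraph.isClique_pair.2 fun _ => hu
    have h2 := ht.2 {a, u} hcl (by rw [hta]; exact Set.singleton_subset_iff.2 (Set.mem_insert _ _))
    rw [hta] at h2
    have hu' : u ∈ ({a} : Set V) := h2 ▸ Set.mem_insert_of_mem _ rfl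
    rw [Set.mem_singleton_iff] at hu'
    exact (G.loopless.irrefl a (hu' ▸ hu)).elim

end Aux
section Prod
variable {V₁ V₂ : Type u} {G₁ : SimpleGraph V₁} {G₂ : SimpleGraph V₂}

lemma clique_coord {s : Set (V₁ × V₂)} (hs : (G₁ □ G₂).IsClique s)
    {x : V₁ × V₂} (hx : x ∈ s) :
    (∀ y ∈ s, y.2 = x.2) ∨ (∀ y ∈ s, y.1 = x.1) := by
  by_cases h : ∃ y ∈ s, y.1 ≠ x.1
  · obtain ⟨y, hy, hyx⟩ := h
    left
    have hxy2 : y.2 = x.2 := by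
      have hadj := hs hy hx (fun h => hyx (by rw [h]))
      rcases boxProd_adj.1 hadj with ⟨_, h2⟩ | ⟨_, h1⟩
      · exact h2
      · exact absurd h1 hyx
    intro z hz
    by_contra hz2
    have hzx1 : z.1 = x.1 := by
      have hne : z ≠ x := fun h => hz2 (by rw [h])
      rcases boxProd_adj.1 (hs hz hx hne) with ⟨_, h2⟩ | ⟨_, h1⟩
      · exact absurd h2 hz2
      · exact h1
    have hzy1 : z.1 = y.1 := by
      have hne : z ≠ y := fun h => hz2 (by rw [h, hxy2])
      rcases boxProd_adj.1 (hs hz hy hne) with ⟨_, h2⟩ | ⟨_, h1⟩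
      · exact absurd (h2.trans hxy2) hz2
      · exact h1
    exact hyx (hzy1 ▸ hzx1)
  · push_neg at h
    right
    exact h

lemma col_isClique {Q : Set V₁} (hQ : G₁.IsClique Q) (v : V₂) :
    (G₁ □ G₂).IsClique (Q ×ˢ {v}) := by
  intro x hx y hy hne
  obtain ⟨hx1, hx2⟩ := hx
  obtain ⟨hy1, hy2⟩ := hy
  have h2 : x.2 = y.2 := by
    simp only [Set.mem_singleton_iff] at hx2 hy2; rw [hx2, hy2]
  have h1 : x.1 ≠ y.1 := fun h => hne (Prod.ext h h2)
  exact boxProd_adj.2 (Or.inl ⟨hQ hx1 hy1 h1, h2⟩)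

lemma row_isClique {R : Set V₂} (hR : G₂.IsClique R) (u : V₁) :
    (G₁ □ G₂).IsClique (({u} : Set V₁) ×ˢ R) := by
  intro x hx y hy hne
  obtain ⟨hx1, hx2⟩ := hx
  obtain ⟨hy1, hy2⟩ := hy
  have h1 : x.1 = y.1 := by
    simp only [Set.mem_singleton_iff] at hx1 hy1; rw [hx1, hy1]
  have h2 : x.2 ≠ y.2 := fun h => hne (Prod.ext h1 h)
  exact boxProd_adj.2 (Or.inr ⟨hR hx2 hy2 h2, h1⟩)

lemma col_mem [Nonempty V₁] (hiso₁ : ∀ v : V₁, ∃ u, G₁.Adj v u)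
    {Q : Set V₁} (hQ : Q ∈ maxCliques G₁) (v : V₂) :
    Q ×ˢ ({v} : Set V₂) ∈ maxCliques (G₁ □ G₂) := by
  refine ⟨col_isClique hQ.1 v, fun t ht hsub => ?_⟩
  obtain ⟨a, haQ, b, hbQ, hab⟩ := maxClique_pair hiso₁ hQ
  have haT : ((a, v) : V₁ × V₂) ∈ t := hsub ⟨haQ, rfl⟩
  have hbT : ((b, v) : V₁ × V₂) ∈ t := hsub ⟨hbQ, rfl⟩
  have hsnd : ∀ y ∈ t, y.2 = v := by
    rcases clique_coord ht haT with h | h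
    · exact h
    · exact absurd (h _ hbT) hab.symm
  have himg : G₁.IsClique (Prod.fst '' t) := by
    rintro p ⟨y, hy, rfl⟩ q ⟨z, hz, rfl⟩ hpq
    have hyz : y ≠ z := fun h => hpq (by rw [h])
    rcases boxProd_adj.1 (ht hy hz hyz) with ⟨h1, _⟩ | ⟨_, h1⟩
    · exact h1
    · exact absurd h1 hpq
  have hQsub : Q ⊆ Prod.fst '' t := fun q hq => ⟨(q, v), hsub ⟨hq, rfl⟩, rfl⟩
  have hQeq : Q = Prod.fst '' t := hQ.2 _ himg hQsub
  refine Set.Subset.antisymm hsub fun y hy => ?_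
  refine ⟨hQeq ▸ ⟨y, hy, rfl⟩, hsnd y hy⟩

lemma row_mem [Nonempty V₂] (hiso₂ : ∀ v : V₂, ∃ u, G₂.Adj v u)
    {R : Set V₂} (hR : R ∈ maxCliques G₂) (u : V₁) :
    ({u} : Set V₁) ×ˢ R ∈ maxCliques (G₁ □ G₂) := by
  refine ⟨row_isClique hR.1 u, fun t ht hsub => ?_⟩
  obtain ⟨a, haR, b, hbR, hab⟩ := maxClique_pair hiso₂ hR
  have haT : ((u, a) : V₁ × V₂) ∈ t := hsub ⟨rfl, haR⟩
  have hbT : ((u, b) : V₁ × V₂) ∈ t := hsub ⟨rfl, hbR⟩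
  have hfst : ∀ y ∈ t, y.1 = u := by
    rcases clique_coord ht haT with h | h
    · exact absurd (h _ hbT) hab.symm
    · exact h
  have himg : G₂.IsClique (Prod.snd '' t) := by
    rintro p ⟨y, hy, rfl⟩ q ⟨z, hz, rfl⟩ hpq
    have hyz : y ≠ z := fun h => hpq (by rw [h])
    rcases boxProd_adj.1 (ht hy hz hyz) with ⟨_, h1⟩ | ⟨h1, _⟩
    · exact absurd h1 hpq
    · exact h1
  have hRsub : R ⊆ Prod.snd '' t := fun r hr => ⟨(u, r), hsub ⟨rfl, hr⟩, rfl⟩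
  have hReq : R = Prod.snd '' t := hR.2 _ himg hRsub
  refine Set.Subset.antisymm hsub fun y hy => ?_
  refine ⟨hfst y hy, hReq ▸ ⟨y, hy, rfl⟩⟩

lemma maxClique_structure [Nonempty V₁] [Nonempty V₂] {s : Set (V₁ × V₂)}
    (hs : s ∈ maxCliques (G₁ □ G₂)) :
    (∃ Q ∈ maxCliques G₁, ∃ v : V₂, s = Q ×ˢ ({v} : Set V₂)) ∨
      (∃ u : V₁, ∃ R ∈ maxCliques G₂, s = ({u} : Set V₁) ×ˢ R) := by
  obtain ⟨x, hx⟩ := maxClique_nonempty hs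
  rcases clique_coord hs.1 hx with hsnd | hfst
  · left
    have hseq : s = (Prod.fst '' s) ×ˢ ({x.2} : Set V₂) := by
      apply Set.Subset.antisymm
      · intro y hy; exact ⟨⟨y, hy, rfl⟩, hsnd y hy⟩
      · rintro ⟨p, w⟩ ⟨⟨y, hy, rfl⟩, hw⟩
        have : (y.1, w) = y := Prod.ext rfl ((Set.mem_singleton_iff.1 hw).trans (hsnd y hy).symm)
        rwa [this]
    have himg : G₁.IsClique (Prod.fst '' s) := by
      rintro p ⟨y, hy, rfl⟩ q ⟨z, hz, rfl⟩ hpq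
      have hyz : y ≠ z := fun h => hpq (by rw [h])
      rcases boxProd_adj.1 (hs.1 hy hz hyz) with ⟨h1, _⟩ | ⟨_, h1⟩
      · exact h1
      · exact absurd h1 hpq
    refine ⟨Prod.fst '' s, ⟨himg, fun t' ht' hsub => ?_⟩, x.2, hseq⟩
    have hcl : (G₁ □ G₂).IsClique (t' ×ˢ ({x.2} : Set V₂)) := col_isClique ht' x.2
    have hsub2 : s ⊆ t' ×ˢ ({x.2} : Set V₂) := by
      rw [hseq]; exact Set.prod_mono hsub subset_rfl
    have := hs.2 _ hcl hsub2
    rw [this, Set.fst_image_prod _ (Set.singleton_nonempty x.2)]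
  · right
    have hseq : s = ({x.1} : Set V₁) ×ˢ (Prod.snd '' s) := by
      apply Set.Subset.antisymm
      · intro y hy; exact ⟨hfst y hy, ⟨y, hy, rfl⟩⟩
      · rintro ⟨p, w⟩ ⟨hp, ⟨y, hy, rfl⟩⟩
        have : (p, y.2) = y := Prod.ext ((Set.mem_singleton_iff.1 hp).trans (hfst y hy).symm) rfl
        rwa [this]
    have himg : G₂.IsClique (Prod.snd '' s) := by
      rintro p ⟨y, hy, rfl⟩ q ⟨z, hz, rfl⟩ hpq
      have hyz : y ≠ z := fun h => hpq (by rw [h])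
      rcases boxProd_adj.1 (hs.1 hy hz hyz) with ⟨_, h1⟩ | ⟨h1, _⟩
      · exact absurd h1 hpq
      · exact h1
    refine ⟨x.1, Prod.snd '' s, ⟨himg, fun t' ht' hsub => ?_⟩, hseq⟩
    have hcl : (G₁ □ G₂).IsClique (({x.1} : Set V₁) ×ˢ t') := row_isClique ht' x.1
    have hsub2 : s ⊆ ({x.1} : Set V₁) ×ˢ t' := by
      rw [hseq]; exact Set.prod_mono subset_rfl hsub
    have := hs.2 _ hcl hsub2
    rw [this, Set.snd_image_prod (Set.singleton_nonempty x.1)]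

lemma col_ne_row {Q : Set V₁} {R : Set V₂} {u : V₁} {v : V₂}
    (hpair : ∃ a ∈ Q, ∃ b ∈ Q, a ≠ b) :
    Q ×ˢ ({v} : Set V₂) ≠ ({u} : Set V₁) ×ˢ R := by
  intro h
  obtain ⟨a, ha, b, hb, hab⟩ := hpair
  have h1 : ((a, v) : V₁ × V₂) ∈ ({u} : Set V₁) ×ˢ R := h ▸ ⟨ha, rfl⟩
  have h2 : ((b, v) : V₁ × V₂) ∈ ({u} : Set V₁) ×ˢ R := h ▸ ⟨hb, rfl⟩
  exact hab (h1.1.trans h2.1.symm)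

end Prod
section Mset
variable {V₁ V₂ : Type u}

/-- The star of `(u,v)`: all max cliques of the product containing `(u,v)`. -/
def Mset (G₁ : SimpleGraph V₁) (G₂ : SimpleGraph V₂) (u : V₁) (v : V₂) :
    Set ↥(maxCliques (G₁ □ G₂)) :=
  {C | (u, v) ∈ (C : Set (V₁ × V₂))}

variable {G₁ : SimpleGraph V₁} {G₂ : SimpleGraph V₂}

lemma Mset_isClique (u : V₁) (v : V₂) :
    (cliqueGraph (G₁ □ G₂)).IsClique (Mset G₁ G₂ u v) :=
  fun _C hC _D hD hne => cliqueGraph_adj.2 ⟨hne, (u, v), hC, hD⟩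

lemma Mset_mem [Finite V₁] [Finite V₂] [Nonempty V₁] [Nonempty V₂]
    (hiso₁ : ∀ v : V₁, ∃ u, G₁.Adj v u) (hiso₂ : ∀ v : V₂, ∃ u, G₂.Adj v u)
    (u : V₁) (v : V₂) : Mset G₁ G₂ u v ∈ maxCliques (cliqueGraph (G₁ □ G₂)) := by
  refine ⟨Mset_isClique u v, fun t ht hsub => Set.Subset.antisymm hsub fun C hC => ?_⟩
  obtain ⟨Q, hQ, hu⟩ := exists_maxClique_mem (G := G₁) u
  obtain ⟨R, hR, hv⟩ := exists_maxClique_mem (G := G₂) v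
  have hQv : Q ×ˢ ({v} : Set V₂) ∈ maxCliques (G₁ □ G₂) := col_mem hiso₁ hQ v
  have hRu : ({u} : Set V₁) ×ˢ R ∈ maxCliques (G₁ □ G₂) := row_mem hiso₂ hR u
  have hCQ : (⟨Q ×ˢ ({v} : Set V₂), hQv⟩ : ↥(maxCliques (G₁ □ G₂))) ∈ t :=
    hsub (Set.mem_prod.2 ⟨hu, rfl⟩)
  have hCR : (⟨({u} : Set V₁) ×ˢ R, hRu⟩ : ↥(maxCliques (G₁ □ G₂))) ∈ t :=
    hsub (Set.mem_prod.2 ⟨rfl, hv⟩)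
  show (u, v) ∈ (C : Set (V₁ × V₂))
  rcases maxClique_structure C.2 with ⟨Q', hQ', v', hCval⟩ | ⟨u', R', hR', hCval⟩
  · -- column case
    have hv' : v' = v := by
      by_cases hCeq : C = ⟨Q ×ˢ ({v} : Set V₂), hQv⟩
      · have : Q' ×ˢ ({v'} : Set V₂) = Q ×ˢ ({v} : Set V₂) := by
          rw [← hCval, hCeq]
        obtain ⟨a, haQ'⟩ := maxClique_nonempty hQ'
        have : ((a, v') : V₁ × V₂) ∈ Q ×ˢ ({v} : Set V₂) := this ▸ ⟨haQ', rfl⟩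
        exact this.2
      · obtain ⟨x, hx1, hx2⟩ := (cliqueGraph_adj.1 (ht hC hCQ hCeq)).2
        rw [hCval] at hx1
        exact hx1.2.symm.trans hx2.2
    have hu' : u ∈ Q' := by
      by_cases hCeq : C = ⟨({u} : Set V₁) ×ˢ R, hRu⟩
      · exfalso
        have : Q' ×ˢ ({v'} : Set V₂) = ({u} : Set V₁) ×ˢ R := by
          rw [← hCval, hCeq]
        exact col_ne_row (maxClique_pair hiso₁ hQ') this
      · obtain ⟨x, hx1, hx2⟩ := (cliqueGraph_adj.1 (ht hC hCR hCeq)).2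
        rw [hCval] at hx1
        rw [← hx2.1]
        exact hx1.1
    rw [hCval]
    exact ⟨hu', hv'.symm⟩
  · -- row case
    have hu' : u' = u := by
      by_cases hCeq : C = ⟨({u} : Set V₁) ×ˢ R, hRu⟩
      · have : ({u'} : Set V₁) ×ˢ R' = ({u} : Set V₁) ×ˢ R := by
          rw [← hCval, hCeq]
        obtain ⟨b, hbR'⟩ := maxClique_nonempty hR'
        have : ((u', b) : V₁ × V₂) ∈ ({u} : Set V₁) ×ˢ R := this ▸ ⟨rfl, hbR'⟩
        exact this.1
      · obtain ⟨x, hx1, hx2⟩ := (cliqueGraph_adj.1 (ht hC hCR hCeq)).2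
        rw [hCval] at hx1
        exact hx1.1.symm.trans hx2.1
    have hv' : v ∈ R' := by
      by_cases hCeq : C = ⟨Q ×ˢ ({v} : Set V₂), hQv⟩
      · exfalso
        have : Q ×ˢ ({v} : Set V₂) = ({u'} : Set V₁) ×ˢ R' := by
          rw [← hCval, hCeq]
        exact col_ne_row (maxClique_pair hiso₁ hQ) this
      · obtain ⟨x, hx1, hx2⟩ := (cliqueGraph_adj.1 (ht hC hCQ hCeq)).2
        rw [hCval] at hx1
        rw [← hx2.2]
        exact hx1.2
    rw [hCval]
    exact ⟨hu'.symm, hv'⟩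

lemma Mset_inj [Finite V₁] [Finite V₂] [Nonempty V₁] [Nonempty V₂]
    (hiso₁ : ∀ v : V₁, ∃ u, G₁.Adj v u) (hiso₂ : ∀ v : V₂, ∃ u, G₂.Adj v u)
    {u u' : V₁} {v v' : V₂} (h : Mset G₁ G₂ u v = Mset G₁ G₂ u' v') : u = u' ∧ v = v' := by
  obtain ⟨Q, hQ, hu⟩ := exists_maxClique_mem (G := G₁) u
  obtain ⟨R, hR, hv⟩ := exists_maxClique_mem (G := G₂) v
  have hQv : Q ×ˢ ({v} : Set V₂) ∈ maxCliques (G₁ □ G₂) := col_mem hiso₁ hQ v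
  have hRu : ({u} : Set V₁) ×ˢ R ∈ maxCliques (G₁ □ G₂) := row_mem hiso₂ hR u
  have h1 : (⟨Q ×ˢ ({v} : Set V₂), hQv⟩ : ↥(maxCliques (G₁ □ G₂))) ∈ Mset G₁ G₂ u' v' :=
    h ▸ (Set.mem_prod.2 ⟨hu, rfl⟩)
  have h2 : (⟨({u} : Set V₁) ×ˢ R, hRu⟩ : ↥(maxCliques (G₁ □ G₂))) ∈ Mset G₁ G₂ u' v' :=
    h ▸ (Set.mem_prod.2 ⟨rfl, hv⟩)
  have hv' : v = v' := (Set.mem_singleton_iff.1 h1.2).symm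
  have hu' : u = u' := (Set.mem_singleton_iff.1 h2.1).symm
  exact ⟨hu', hv'⟩

lemma Mset_adj [Finite V₁] [Finite V₂] [Nonempty V₁] [Nonempty V₂]
    (hiso₁ : ∀ v : V₁, ∃ u, G₁.Adj v u) (hiso₂ : ∀ v : V₂, ∃ u, G₂.Adj v u)
    {u u' : V₁} {v v' : V₂} :
    (Mset G₁ G₂ u v ≠ Mset G₁ G₂ u' v' ∧ (Mset G₁ G₂ u v ∩ Mset G₁ G₂ u' v').Nonempty) ↔
      (G₁ □ G₂).Adj (u, v) (u', v') := by
  constructor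
  · rintro ⟨hne, C, hC, hC'⟩
    have hxy : ¬(u = u' ∧ v = v') := fun ⟨h1, h2⟩ => hne (by rw [h1, h2])
    have hC1 : ((u, v) : V₁ × V₂) ∈ (C : Set (V₁ × V₂)) := hC
    have hC1' : ((u', v') : V₁ × V₂) ∈ (C : Set (V₁ × V₂)) := hC'
    rcases maxClique_structure C.2 with ⟨Q, hQ, w, hCval⟩ | ⟨w, R, hR, hCval⟩
    · rw [hCval] at hC1 hC1'
      have hv : v = w := hC1.2
      have hv' : v' = w := hC1'.2
      have huu : u ≠ u' := fun h => hxy ⟨h, hv.trans hv'.symm⟩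
      exact boxProd_adj.2 (Or.inl ⟨hQ.1 hC1.1 hC1'.1 huu, hv.trans hv'.symm⟩)
    · rw [hCval] at hC1 hC1'
      have hu : u = w := hC1.1
      have hu' : u' = w := hC1'.1
      have hvv : v ≠ v' := fun h => hxy ⟨hu.trans hu'.symm, h⟩
      exact boxProd_adj.2 (Or.inr ⟨hR.1 hC1.2 hC1'.2 hvv, hu.trans hu'.symm⟩)
  · intro hadj
    constructor
    · intro h
      obtain ⟨h1, h2⟩ := Mset_inj hiso₁ hiso₂ h
      subst h1
      subst h2
      exact (G₁ □ G₂).loopless.irrefl (u, v) hadj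
    · have hcl : (G₁ □ G₂).IsClique {((u, v) : V₁ × V₂), (u', v')} :=
        SimpleGraph.isClique_pair.2 fun _ => hadj
      obtain ⟨C, hCmem, hsub⟩ := exists_max_supset hcl
      exact ⟨⟨C, hCmem⟩, hsub (Set.mem_insert _ _), hsub (Set.mem_insert_of_mem _ rfl)⟩

end Mset
section Surj
variable {V₁ V₂ : Type u} {G₁ : SimpleGraph V₁} {G₂ : SimpleGraph V₂}

lemma prod_singleton_inj {Q Q' : Set V₁} {v v' : V₂}
    (h : Q ×ˢ ({v} : Set V₂) = Q' ×ˢ ({v'} : Set V₂)) : Q = Q' := by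
  rw [← Set.fst_image_prod Q (Set.singleton_nonempty v), h,
    Set.fst_image_prod Q' (Set.singleton_nonempty v')]

lemma singleton_prod_inj {R R' : Set V₂} {u u' : V₁}
    (h : ({u} : Set V₁) ×ˢ R = ({u'} : Set V₁) ×ˢ R') : R = R' := by
  rw [← Set.snd_image_prod (Set.singleton_nonempty u) R, h,
    Set.snd_image_prod (Set.singleton_nonempty u') R']

lemma Mset_surj [Finite V₁] [Finite V₂] [Nonempty V₁] [Nonempty V₂]
    (hH₁ : CliqueHelly G₁) (hH₂ : CliqueHelly G₂)
    (hiso₁ : ∀ v : V₁, ∃ u, G₁.Adj v u) (hiso₂ : ∀ v : V₂, ∃ u, G₂.Adj v u)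
    {F : Set ↥(maxCliques (G₁ □ G₂))} (hF : F ∈ maxCliques (cliqueGraph (G₁ □ G₂))) :
    ∃ u v, F = Mset G₁ G₂ u v := by
  haveI : Nonempty ↥(maxCliques (G₁ □ G₂)) := by
    obtain ⟨x⟩ := (inferInstance : Nonempty (V₁ × V₂))
    obtain ⟨t, ht, -⟩ := exists_maxClique_mem (G := G₁ □ G₂) x
    exact ⟨⟨t, ht⟩⟩
  by_cases hcol : ∃ C ∈ F, ∃ Q ∈ maxCliques G₁, ∃ v : V₂, (C : Set (V₁ × V₂)) = Q ×ˢ ({v} : Set V₂)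
  · by_cases hrow : ∃ D ∈ F, ∃ u : V₁, ∃ R ∈ maxCliques G₂,
        (D : Set (V₁ × V₂)) = ({u} : Set V₁) ×ˢ R
    · -- mixed case
      obtain ⟨C, hCF, Q, hQ, v, hCval⟩ := hcol
      obtain ⟨D, hDF, u, R, hR, hDval⟩ := hrow
      have hCD : C ≠ D := by
        intro h
        exact col_ne_row (maxClique_pair hiso₁ hQ)
          (hCval.symm.trans ((congrArg Subtype.val h).trans hDval))
      obtain ⟨x, hxC, hxD⟩ := (cliqueGraph_adj.1 (hF.1 hCF hDF hCD)).2
      rw [hCval] at hxC; rw [hDval] at hxD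
      have huQ : u ∈ Q := hxD.1 ▸ hxC.1
      have hvR : v ∈ R := hxC.2 ▸ hxD.2
      refine ⟨u, v, hF.2 _ (Mset_isClique u v) fun E hEF => ?_⟩
      show ((u, v) : V₁ × V₂) ∈ (E : Set (V₁ × V₂))
      rcases maxClique_structure E.2 with ⟨Q', hQ', v', hEval⟩ | ⟨u', R', hR', hEval⟩
      · have hv' : v' = v := by
          by_cases hEC : E = C
          · have : Q' ×ˢ ({v'} : Set V₂) = Q ×ˢ ({v} : Set V₂) := by
              rw [← hEval, hEC, hCval]
            obtain ⟨a, ha⟩ := maxClique_nonempty hQ'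
            exact (show ((a, v') : V₁ × V₂) ∈ Q ×ˢ ({v} : Set V₂) from this ▸ ⟨ha, rfl⟩).2
          · obtain ⟨x, hx1, hx2⟩ := (cliqueGraph_adj.1 (hF.1 hEF hCF hEC)).2
            rw [hEval] at hx1; rw [hCval] at hx2
            exact hx1.2.symm.trans hx2.2
        have hu' : u ∈ Q' := by
          by_cases hED : E = D
          · exact absurd (by rw [← hEval, hED, hDval])
              (col_ne_row (maxClique_pair hiso₁ hQ'))
          · obtain ⟨x, hx1, hx2⟩ := (cliqueGraph_adj.1 (hF.1 hEF hDF hED)).2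
            rw [hEval] at hx1; rw [hDval] at hx2
            exact hx2.1 ▸ hx1.1
        rw [hEval]; exact ⟨hu', hv'.symm⟩
      · have hu' : u' = u := by
          by_cases hED : E = D
          · have : ({u'} : Set V₁) ×ˢ R' = ({u} : Set V₁) ×ˢ R := by
              rw [← hEval, hED, hDval]
            obtain ⟨b, hb⟩ := maxClique_nonempty hR'
            exact (show ((u', b) : V₁ × V₂) ∈ ({u} : Set V₁) ×ˢ R from this ▸ ⟨rfl, hb⟩).1
          · obtain ⟨x, hx1, hx2⟩ := (cliqueGraph_adj.1 (hF.1 hEF hDF hED)).2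
            rw [hEval] at hx1; rw [hDval] at hx2
            exact hx1.1.symm.trans hx2.1
        have hv' : v ∈ R' := by
          by_cases hEC : E = C
          · have heq : Q ×ˢ ({v} : Set V₂) = ({u'} : Set V₁) ×ˢ R' := by
              rw [← hCval, ← hEC, hEval]
            exact absurd heq (col_ne_row (maxClique_pair hiso₁ hQ))
          · obtain ⟨x, hx1, hx2⟩ := (cliqueGraph_adj.1 (hF.1 hEF hCF hEC)).2
            rw [hEval] at hx1; rw [hCval] at hx2
            exact hx2.2 ▸ hx1.2
        rw [hEval]; exact ⟨hu'.symm, hv'⟩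
    · -- all columns
      push_neg at hrow
      obtain ⟨C₀, hC₀F, Q₀, hQ₀, v, hC₀val⟩ := hcol
      have hall : ∀ C ∈ F, ∃ Q ∈ maxCliques G₁, (C : Set (V₁ × V₂)) = Q ×ˢ ({v} : Set V₂) := by
        intro C hCF
        rcases maxClique_structure C.2 with ⟨Q', hQ', v', hCval⟩ | ⟨u', R', hR', hCval⟩
        · refine ⟨Q', hQ', ?_⟩
          rw [hCval]
          congr 1
          by_cases hEC : C = C₀
          · have : Q' ×ˢ ({v'} : Set V₂) = Q₀ ×ˢ ({v} : Set V₂) := by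
              rw [← hCval, hEC, hC₀val]
            obtain ⟨a, ha⟩ := maxClique_nonempty hQ'
            have hvv : v' = v :=
              (show ((a, v') : V₁ × V₂) ∈ Q₀ ×ˢ ({v} : Set V₂) from this ▸ ⟨ha, rfl⟩).2
            rw [hvv]
          · obtain ⟨x, hx1, hx2⟩ := (cliqueGraph_adj.1 (hF.1 hCF hC₀F hEC)).2
            rw [hCval] at hx1; rw [hC₀val] at hx2
            rw [hx1.2.symm.trans hx2.2]
        · exact absurd hCval (hrow C hCF u' R' hR')
      set S : Set (Set V₁) := {Q | ∃ C ∈ F, (C : Set (V₁ × V₂)) = Q ×ˢ ({v} : Set V₂)} with hS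
      have hSmax : ∀ Q ∈ S, Q ∈ maxCliques G₁ := by
        rintro Q ⟨C, hCF, hQval⟩
        obtain ⟨Q', hQ', hQ'val⟩ := hall C hCF
        rwa [prod_singleton_inj (hQval.symm.trans hQ'val)]
      have hSne : S.Nonempty := ⟨Q₀, C₀, hC₀F, hC₀val⟩
      have hSint : ∀ Q ∈ S, ∀ Q' ∈ S, (Q ∩ Q').Nonempty := by
        rintro Q ⟨C, hCF, hQval⟩ Q' ⟨C', hC'F, hQ'val⟩
        by_cases hQQ' : Q = Q'
        · subst hQQ'
          rw [Set.inter_self]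
          exact maxClique_nonempty (hSmax Q ⟨C, hCF, hQval⟩)
        · have hCC' : C ≠ C' := by
            intro h
            exact hQQ' (prod_singleton_inj ((hQval.symm.trans (by rw [h])).trans hQ'val))
          obtain ⟨x, hx1, hx2⟩ := (cliqueGraph_adj.1 (hF.1 hCF hC'F hCC')).2
          rw [hQval] at hx1; rw [hQ'val] at hx2
          exact ⟨x.1, hx1.1, hx2.1⟩
      obtain ⟨uu, huu⟩ := hH₁ S hSne hSmax hSint
      rw [Set.mem_iInter₂] at huu
      refine ⟨uu, v, hF.2 _ (Mset_isClique uu v) fun C hCF => ?_⟩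
      obtain ⟨Q, _hQ, hCval⟩ := hall C hCF
      show ((uu, v) : V₁ × V₂) ∈ (C : Set (V₁ × V₂))
      rw [hCval]
      exact ⟨huu Q ⟨C, hCF, hCval⟩, rfl⟩
  · -- no columns: all rows
    push_neg at hcol
    obtain ⟨C₀, hC₀F⟩ := maxClique_nonempty hF
    have hC₀row : ∃ u : V₁, ∃ R ∈ maxCliques G₂, (C₀ : Set (V₁ × V₂)) = ({u} : Set V₁) ×ˢ R := by
      rcases maxClique_structure C₀.2 with ⟨Q', hQ', v', hval⟩ | h
      · exact absurd hval (hcol C₀ hC₀F Q' hQ' v')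
      · exact h
    obtain ⟨u, R₀, hR₀, hC₀val⟩ := hC₀row
    have hall : ∀ C ∈ F, ∃ R ∈ maxCliques G₂, (C : Set (V₁ × V₂)) = ({u} : Set V₁) ×ˢ R := by
      intro C hCF
      rcases maxClique_structure C.2 with ⟨Q', hQ', v', hCval⟩ | ⟨u', R', hR', hCval⟩
      · exact absurd hCval (hcol C hCF Q' hQ' v')
      · refine ⟨R', hR', ?_⟩
        rw [hCval]
        congr 1
        by_cases hEC : C = C₀
        · have : ({u'} : Set V₁) ×ˢ R' = ({u} : Set V₁) ×ˢ R₀ := by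
            rw [← hCval, hEC, hC₀val]
          obtain ⟨b, hb⟩ := maxClique_nonempty hR'
          have huu : u' = u :=
            (show ((u', b) : V₁ × V₂) ∈ ({u} : Set V₁) ×ˢ R₀ from this ▸ ⟨rfl, hb⟩).1
          rw [huu]
        · obtain ⟨x, hx1, hx2⟩ := (cliqueGraph_adj.1 (hF.1 hCF hC₀F hEC)).2
          rw [hCval] at hx1; rw [hC₀val] at hx2
          rw [hx1.1.symm.trans hx2.1]
    set S : Set (Set V₂) := {R | ∃ C ∈ F, (C : Set (V₁ × V₂)) = ({u} : Set V₁) ×ˢ R} with hS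
    have hSmax : ∀ R ∈ S, R ∈ maxCliques G₂ := by
      rintro R ⟨C, hCF, hRval⟩
      obtain ⟨R', hR', hR'val⟩ := hall C hCF
      rwa [singleton_prod_inj (hRval.symm.trans hR'val)]
    have hSne : S.Nonempty := ⟨R₀, C₀, hC₀F, hC₀val⟩
    have hSint : ∀ R ∈ S, ∀ R' ∈ S, (R ∩ R').Nonempty := by
      rintro R ⟨C, hCF, hRval⟩ R' ⟨C', hC'F, hR'val⟩
      by_cases hRR' : R = R'
      · subst hRR'
        rw [Set.inter_self]
        exact maxClique_nonempty (hSmax R ⟨C, hCF, hRval⟩)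
      · have hCC' : C ≠ C' := by
          intro h
          exact hRR' (singleton_prod_inj ((hRval.symm.trans (by rw [h])).trans hR'val))
        obtain ⟨x, hx1, hx2⟩ := (cliqueGraph_adj.1 (hF.1 hCF hC'F hCC')).2
        rw [hRval] at hx1; rw [hR'val] at hx2
        exact ⟨x.2, hx1.2, hx2.2⟩
    obtain ⟨vv, hvv⟩ := hH₂ S hSne hSmax hSint
    rw [Set.mem_iInter₂] at hvv
    refine ⟨u, vv, hF.2 _ (Mset_isClique u vv) fun C hCF => ?_⟩
    obtain ⟨R, _hR, hCval⟩ := hall C hCF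
    show ((u, vv) : V₁ × V₂) ∈ (C : Set (V₁ × V₂))
    rw [hCval]
    exact ⟨rfl, hvv R ⟨C, hCF, hCval⟩⟩

end Surj

/-- The Cartesian product of two finite clique-Helly graphs, each with at least two
vertices and no isolated vertices, is `K`-periodic. -/
theorem kPeriodic_boxProd {V₁ V₂ : Type u} [Finite V₁] [Finite V₂]
    [Nontrivial V₁] [Nontrivial V₂] (G₁ : SimpleGraph V₁) (G₂ : SimpleGraph V₂)
    (hH₁ : CliqueHelly G₁) (hH₂ : CliqueHelly G₂)
    (hiso₁ : ∀ v : V₁, ∃ u : V₁, G₁.Adj v u) (hiso₂ : ∀ v : V₂, ∃ u : V₂, G₂.Adj v u) :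
    KPeriodic (BGraph.of (G₁ □ G₂)) := by
  classical
  have hbij : Function.Bijective (fun x : V₁ × V₂ =>
      (⟨Mset G₁ G₂ x.1 x.2, Mset_mem hiso₁ hiso₂ x.1 x.2⟩ :
        ↥(maxCliques (cliqueGraph (G₁ □ G₂))))) := by
    constructor
    · intro x y h
      obtain ⟨h1, h2⟩ := Mset_inj hiso₁ hiso₂ (Subtype.ext_iff.1 h)
      exact Prod.ext h1 h2
    · intro F
      obtain ⟨u, v, hF⟩ := Mset_surj hH₁ hH₂ hiso₁ hiso₂ F.2
      exact ⟨(u, v), Subtype.ext hF.symm⟩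
  let e : (G₁ □ G₂) ≃g cliqueGraph (cliqueGraph (G₁ □ G₂)) :=
    { toEquiv := Equiv.ofBijective _ hbij
      map_rel_iff' := by
        intro a b
        rw [cliqueGraph_adj]
        show ((⟨Mset G₁ G₂ a.1 a.2, _⟩ : ↥(maxCliques (cliqueGraph (G₁ □ G₂)))) ≠
            ⟨Mset G₁ G₂ b.1 b.2, _⟩ ∧
            (Mset G₁ G₂ a.1 a.2 ∩ Mset G₁ G₂ b.1 b.2).Nonempty) ↔
          (G₁ □ G₂).Adj (a.1, a.2) (b.1, b.2)
        rw [ne_eq, Subtype.mk.injEq, ← ne_eq]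
        exact Mset_adj hiso₁ hiso₂ }
  exact ⟨2, two_pos, ⟨e.symm⟩⟩
end

section
/- Let G₁ and G₂ be finite clique-Helly simple graphs, each having at least two vertices and no isolated vertices, and let G = G₁ □ G₂. Then for every clique Q of the clique graph K(G) (a maximal family of pairwise intersecting cliques of G), the total intersection ⋂_{x ∈ Q} x is a singleton: there is exactly one vertex of G belonging to every clique in Q. -/
open SimpleGraph

universe u v

section Helpers

variable {V V₁ V₂ : Type u}

lemma exists_isMaxClique_superset [Finite V] (G : SimpleGraph V) {s : Set V}
    (hs : G.IsClique s) : ∃ t, IsMaxClique G t ∧ s ⊆ t := by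
  obtain ⟨t, ht, hmax⟩ := Set.Finite.exists_maximalFor id {t | G.IsClique t ∧ s ⊆ t}
    (Set.toFinite _) ⟨s, hs, subset_rfl⟩
  exact ⟨t, ⟨ht.1, fun t' ht' hsub => Set.Subset.antisymm hsub (hmax ⟨ht', ht.2.trans hsub⟩ hsub)⟩, ht.2⟩

lemma IsMaxClique.nonempty [Nonempty V] {G : SimpleGraph V} {s : Set V}
    (hs : IsMaxClique G s) : s.Nonempty := by
  by_contra hne
  rw [Set.not_nonempty_iff_eq_empty] at hne
  obtain ⟨v⟩ := ‹Nonempty V›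
  have h2 := hs.2 {v} (by simp [SimpleGraph.isClique_iff]) (hne ▸ Set.empty_subset _)
  rw [hne] at h2
  exact (Set.singleton_nonempty v).ne_empty h2.symm

lemma IsMaxClique.exists_ne {G : SimpleGraph V} (hiso : ∀ v, ∃ u, G.Adj v u)
    {s : Set V} (hs : IsMaxClique G s) {v : V} (hv : v ∈ s) : ∃ u ∈ s, u ≠ v := by
  by_contra h
  push_neg at h
  obtain ⟨u, hu⟩ := hiso v
  have hsub : s ⊆ {v, u} := fun x hx => Or.inl (h x hx)
  have hcl : G.IsClique {v, u} := by
    intro x hx y hy hxy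
    simp only [Set.mem_insert_iff, Set.mem_singleton_iff] at hx hy
    rcases hx with rfl | rfl <;> rcases hy with rfl | rfl
    · exact absurd rfl hxy
    · exact hu
    · exact hu.symm
    · exact absurd rfl hxy
  have heq := hs.2 {v, u} hcl hsub
  have hus : u ∈ s := heq ▸ Or.inr rfl
  exact hu.ne' (h u hus)

variable {G₁ : SimpleGraph V₁} {G₂ : SimpleGraph V₂}

lemma shared_snd {s : Set (V₁ × V₂)} (hs : (G₁ □ G₂).IsClique s)
    {x y : V₁ × V₂} (hx : x ∈ s) (hy : y ∈ s) (hne : x.1 ≠ y.1) :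
    ∀ z ∈ s, z.2 = x.2 := by
  have hadj := hs hx hy (fun h => hne (by rw [h]))
  rw [boxProd_adj] at hadj
  have hxy2 : x.2 = y.2 := by
    rcases hadj with ⟨_, h⟩ | ⟨_, h⟩
    · exact h
    · exact absurd h hne
  intro z hz
  by_contra hz2
  have hzx : z ≠ x := fun h => hz2 (by rw [h])
  have hzy : z ≠ y := fun h => hz2 ((congrArg Prod.snd h).trans hxy2.symm)
  have h1 := hs hz hx hzx
  have h2 := hs hz hy hzy
  rw [boxProd_adj] at h1 h2
  have e1 : z.1 = x.1 := by
    rcases h1 with ⟨_, h⟩ | ⟨_, h⟩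
    · exact absurd h hz2
    · exact h
  have e2 : z.1 = y.1 := by
    rcases h2 with ⟨_, h⟩ | ⟨_, h⟩
    · exact absurd (h.trans hxy2.symm) hz2
    · exact h
  exact hne (e1.symm.trans e2)

lemma shared_fst {s : Set (V₁ × V₂)} (hs : (G₁ □ G₂).IsClique s)
    {x y : V₁ × V₂} (hx : x ∈ s) (hy : y ∈ s) (hne : x.2 ≠ y.2) :
    ∀ z ∈ s, z.1 = x.1 := by
  have hadj := hs hx hy (fun h => hne (by rw [h]))
  rw [boxProd_adj] at hadj
  have hxy1 : x.1 = y.1 := by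
    rcases hadj with ⟨_, h⟩ | ⟨_, h⟩
    · exact absurd h hne
    · exact h
  intro z hz
  by_contra hz1
  have hzx : z ≠ x := fun h => hz1 (by rw [h])
  have hzy : z ≠ y := fun h => hz1 ((congrArg Prod.fst h).trans hxy1.symm)
  have h1 := hs hz hx hzx
  have h2 := hs hz hy hzy
  rw [boxProd_adj] at h1 h2
  have e1 : z.2 = x.2 := by
    rcases h1 with ⟨_, h⟩ | ⟨_, h⟩
    · exact h
    · exact absurd h hz1
  have e2 : z.2 = y.2 := by
    rcases h2 with ⟨_, h⟩ | ⟨_, h⟩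
    · exact h
    · exact absurd (h.trans hxy1.symm) hz1
  exact hne (e1.symm.trans e2)

lemma isClique_horiz {C : Set V₁} (hC : G₁.IsClique C) (b : V₂) :
    (G₁ □ G₂).IsClique (C ×ˢ ({b} : Set V₂)) := by
  intro x hx y hy hxy
  obtain ⟨hx1, hx2⟩ := Set.mem_prod.mp hx
  obtain ⟨hy1, hy2⟩ := Set.mem_prod.mp hy
  rw [Set.mem_singleton_iff] at hx2 hy2
  rw [boxProd_adj]
  left
  refine ⟨hC hx1 hy1 ?_, hx2.trans hy2.symm⟩
  exact fun h => hxy (Prod.ext h (hx2.trans hy2.symm))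

lemma isClique_vert {D : Set V₂} (hD : G₂.IsClique D) (a : V₁) :
    (G₁ □ G₂).IsClique (({a} : Set V₁) ×ˢ D) := by
  intro x hx y hy hxy
  obtain ⟨hx1, hx2⟩ := Set.mem_prod.mp hx
  obtain ⟨hy1, hy2⟩ := Set.mem_prod.mp hy
  rw [Set.mem_singleton_iff] at hx1 hy1
  rw [boxProd_adj]
  right
  refine ⟨hD hx2 hy2 ?_, hx1.trans hy1.symm⟩
  exact fun h => hxy (Prod.ext (hx1.trans hy1.symm) h)

lemma maxClique_structure_s19 [Nonempty V₁] [Nonempty V₂] {s : Set (V₁ × V₂)}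
    (hs : IsMaxClique (G₁ □ G₂) s) :
    (∃ C b, IsMaxClique G₁ C ∧ s = C ×ˢ ({b} : Set V₂)) ∨
    (∃ a D, IsMaxClique G₂ D ∧ s = ({a} : Set V₁) ×ˢ D) := by
  obtain ⟨x₀, hx₀⟩ := hs.nonempty
  by_cases hcase : ∀ z ∈ s, z.2 = x₀.2
  · left
    set C : Set V₁ := {a | (a, x₀.2) ∈ s} with hCdef
    have hseq : s = C ×ˢ ({x₀.2} : Set V₂) := by
      ext z
      rw [Set.mem_prod, Set.mem_singleton_iff]
      constructor
      · intro hz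
        have h2 := hcase z hz
        refine ⟨?_, h2⟩
        show (z.1, x₀.2) ∈ s
        rw [← h2]
        exact hz
      · rintro ⟨h1, h2⟩
        have : z = (z.1, x₀.2) := Prod.ext rfl h2
        rw [this]
        exact h1
    have hCclique : G₁.IsClique C := by
      intro a ha a' ha' hne
      have hadj := hs.1 ha ha' (fun h => hne (congrArg Prod.fst h))
      rw [boxProd_adj] at hadj
      rcases hadj with ⟨h, _⟩ | ⟨_, h⟩
      · exact h
      · exact absurd h hne
    refine ⟨C, x₀.2, ⟨hCclique, ?_⟩, hseq⟩
    intro C' hC' hsub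
    have ht : (G₁ □ G₂).IsClique (C' ×ˢ ({x₀.2} : Set V₂)) := isClique_horiz hC' _
    have h2 := hs.2 _ ht (by rw [hseq]; exact Set.prod_mono_left hsub)
    apply Set.Subset.antisymm hsub
    intro a ha
    show (a, x₀.2) ∈ s
    rw [h2]
    exact Set.mem_prod.mpr ⟨ha, rfl⟩
  · right
    push_neg at hcase
    have hfst : ∀ z ∈ s, z.1 = x₀.1 := by
      intro z hz
      by_contra hne
      obtain ⟨w, hw, hw2⟩ := hcase
      have e1 := shared_snd hs.1 hz hx₀ hne w hw
      have e2 := shared_snd hs.1 hz hx₀ hne x₀ hx₀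
      exact hw2 (e1.trans e2.symm)
    set D : Set V₂ := {d | (x₀.1, d) ∈ s} with hDdef
    have hseq : s = ({x₀.1} : Set V₁) ×ˢ D := by
      ext z
      rw [Set.mem_prod, Set.mem_singleton_iff]
      constructor
      · intro hz
        have h1 := hfst z hz
        refine ⟨h1, ?_⟩
        show (x₀.1, z.2) ∈ s
        rw [← h1]
        exact hz
      · rintro ⟨h1, h2⟩
        have : z = (x₀.1, z.2) := Prod.ext h1 rfl
        rw [this]
        exact h2
    have hDclique : G₂.IsClique D := by
      intro d hd d' hd' hne
      have hadj := hs.1 hd hd' (fun h => hne (congrArg Prod.snd h))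
      rw [boxProd_adj] at hadj
      rcases hadj with ⟨_, h⟩ | ⟨h, _⟩
      · exact absurd h hne
      · exact h
    refine ⟨x₀.1, D, ⟨hDclique, ?_⟩, hseq⟩
    intro D' hD' hsub
    have ht : (G₁ □ G₂).IsClique (({x₀.1} : Set V₁) ×ˢ D') := isClique_vert hD' _
    have h2 := hs.2 _ ht (by rw [hseq]; exact Set.prod_mono_right hsub)
    apply Set.Subset.antisymm hsub
    intro d hd
    show (x₀.1, d) ∈ s
    rw [h2]
    exact Set.mem_prod.mpr ⟨rfl, hd⟩

lemma isMaxClique_vert [Nonempty V₂] (hiso₂ : ∀ v : V₂, ∃ u, G₂.Adj v u)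
    {D : Set V₂} (hD : IsMaxClique G₂ D) (a : V₁) :
    IsMaxClique (G₁ □ G₂) (({a} : Set V₁) ×ˢ D) := by
  refine ⟨isClique_vert hD.1 a, ?_⟩
  intro t ht hsub
  obtain ⟨d, hd⟩ := hD.nonempty
  obtain ⟨d', hd', hdd⟩ := hD.exists_ne hiso₂ hd
  have had : ((a, d) : V₁ × V₂) ∈ t := hsub (Set.mem_prod.mpr ⟨rfl, hd⟩)
  have had' : ((a, d') : V₁ × V₂) ∈ t := hsub (Set.mem_prod.mpr ⟨rfl, hd'⟩)
  have hfst : ∀ z ∈ t, z.1 = a := shared_fst ht had had' hdd.symm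
  set D' : Set V₂ := {e | (a, e) ∈ t} with hD'def
  have hD'c : G₂.IsClique D' := by
    intro e he e' he' hne
    have hadj := ht he he' (fun h => hne (congrArg Prod.snd h))
    rw [boxProd_adj] at hadj
    rcases hadj with ⟨h, _⟩ | ⟨h, _⟩
    · exact absurd h (G₁.irrefl)
    · exact h
  have hDeq := hD.2 D' hD'c (fun e he => hsub (Set.mem_prod.mpr ⟨rfl, he⟩))
  apply Set.Subset.antisymm hsub
  intro z hz
  have h1 := hfst z hz
  have h2 : z.2 ∈ D' := by
    show (a, z.2) ∈ t
    rw [← h1]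
    exact hz
  rw [← hDeq] at h2
  exact Set.mem_prod.mpr ⟨h1, h2⟩

lemma isMaxClique_horiz [Nonempty V₁] (hiso₁ : ∀ v : V₁, ∃ u, G₁.Adj v u)
    {C : Set V₁} (hC : IsMaxClique G₁ C) (b : V₂) :
    IsMaxClique (G₁ □ G₂) (C ×ˢ ({b} : Set V₂)) := by
  refine ⟨isClique_horiz hC.1 b, ?_⟩
  intro t ht hsub
  obtain ⟨c, hc⟩ := hC.nonempty
  obtain ⟨c', hc', hcc⟩ := hC.exists_ne hiso₁ hc
  have hcb : ((c, b) : V₁ × V₂) ∈ t := hsub (Set.mem_prod.mpr ⟨hc, rfl⟩)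
  have hcb' : ((c', b) : V₁ × V₂) ∈ t := hsub (Set.mem_prod.mpr ⟨hc', rfl⟩)
  have hsnd : ∀ z ∈ t, z.2 = b := shared_snd ht hcb hcb' hcc.symm
  set C' : Set V₁ := {e | (e, b) ∈ t} with hC'def
  have hC'c : G₁.IsClique C' := by
    intro e he e' he' hne
    have hadj := ht he he' (fun h => hne (congrArg Prod.fst h))
    rw [boxProd_adj] at hadj
    rcases hadj with ⟨h, _⟩ | ⟨h, _⟩
    · exact h
    · exact absurd h (G₂.irrefl)
  have hCeq := hC.2 C' hC'c (fun e he => hsub (Set.mem_prod.mpr ⟨he, rfl⟩))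
  apply Set.Subset.antisymm hsub
  intro z hz
  have h1 := hsnd z hz
  have h2 : z.1 ∈ C' := by
    show (z.1, b) ∈ t
    rw [← h1]
    exact hz
  rw [← hCeq] at h2
  exact Set.mem_prod.mpr ⟨h2, h1⟩

end Helpers

/-- Let `G = G₁ □ G₂` where `G₁`, `G₂` are finite clique-Helly graphs, each with at least
two vertices and no isolated vertices. Then for every clique `Q` of the clique graph `K(G)`,
there is exactly one vertex of `G` belonging to every clique in `Q`, i.e. the total
intersection of the members of `Q` is a singleton. -/
theorem maxClique_cliqueGraph_boxProd_inter_singleton {V₁ V₂ : Type u} [Finite V₁] [Finite V₂]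
    [Nontrivial V₁] [Nontrivial V₂] (G₁ : SimpleGraph V₁) (G₂ : SimpleGraph V₂)
    (hH₁ : CliqueHelly G₁) (hH₂ : CliqueHelly G₂)
    (hiso₁ : ∀ v : V₁, ∃ u : V₁, G₁.Adj v u) (hiso₂ : ∀ v : V₂, ∃ u : V₂, G₂.Adj v u)
    (Q : Set ↥(maxCliques (G₁ □ G₂))) (hQ : Q ∈ maxCliques (cliqueGraph (G₁ □ G₂))) :
    ∃ v : V₁ × V₂, (⋂ x ∈ Q, (x : Set (V₁ × V₂))) = {v} := by
  classical
  have hmem : ∀ x : ↥(maxCliques (G₁ □ G₂)), IsMaxClique (G₁ □ G₂) ↑x := fun x => x.2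
  have hpair : ∀ x ∈ Q, ∀ y ∈ Q, ((↑x : Set (V₁ × V₂)) ∩ ↑y).Nonempty := by
    intro x hx y hy
    by_cases h : x = y
    · subst h
      rw [Set.inter_self]
      exact (hmem x).nonempty
    · exact (show x ≠ y ∧ ((x : Set (V₁ × V₂)) ∩ y).Nonempty from hQ.1 hx hy h).2
  -- Q is nonempty
  have hQne : Q.Nonempty := by
    by_contra h
    rw [Set.not_nonempty_iff_eq_empty] at h
    obtain ⟨v⟩ : Nonempty (V₁ × V₂) := inferInstance
    obtain ⟨R, hR, -⟩ := exists_isMaxClique_superset (G₁ □ G₂)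
      (show (G₁ □ G₂).IsClique {v} by simp [SimpleGraph.isClique_iff])
    have hcl : (cliqueGraph (G₁ □ G₂)).IsClique {(⟨R, hR⟩ : ↥(maxCliques (G₁ □ G₂)))} := by
      simp [SimpleGraph.isClique_iff]
    have heq := hQ.2 _ hcl (h ▸ Set.empty_subset _)
    rw [h] at heq
    exact (Set.singleton_nonempty _).ne_empty heq.symm
  -- existence of a common vertex
  have hexist : ∃ v : V₁ × V₂, ∀ x ∈ Q, v ∈ (↑x : Set (V₁ × V₂)) := by
    by_cases hvert : ∃ x ∈ Q, ∃ a D, IsMaxClique G₂ D ∧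
        (↑x : Set (V₁ × V₂)) = ({a} : Set V₁) ×ˢ D
    · by_cases hhoriz : ∃ x ∈ Q, ∃ C b, IsMaxClique G₁ C ∧
          (↑x : Set (V₁ × V₂)) = C ×ˢ ({b} : Set V₂)
      · -- mixed case
        obtain ⟨xv, hxv, a, D, hD, hveq⟩ := hvert
        obtain ⟨xh, hxh, C, b, hC, hheq⟩ := hhoriz
        obtain ⟨w, hw1, hw2⟩ := hpair xh hxh xv hxv
        rw [hheq] at hw1
        rw [hveq] at hw2
        obtain ⟨hwC, hwb⟩ := Set.mem_prod.mp hw1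
        obtain ⟨hwa, hwD⟩ := Set.mem_prod.mp hw2
        rw [Set.mem_singleton_iff] at hwb hwa
        have haC : a ∈ C := hwa ▸ hwC
        have hbD : b ∈ D := hwb ▸ hwD
        refine ⟨(a, b), ?_⟩
        intro x hx
        rcases maxClique_structure_s19 (hmem x) with ⟨C', b', hC', heq⟩ | ⟨a', D', hD', heq⟩
        · -- horizontal member
          obtain ⟨u, hu1, hu2⟩ := hpair x hx xv hxv
          rw [heq] at hu1
          rw [hveq] at hu2
          obtain ⟨p, hp1, hp2⟩ := hpair x hx xh hxh
          rw [heq] at hp1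
          rw [hheq] at hp2
          have hu1' := Set.mem_prod.mp hu1
          have hu2' := Set.mem_prod.mp hu2
          have hp1' := Set.mem_prod.mp hp1
          have hp2' := Set.mem_prod.mp hp2
          rw [heq]
          refine Set.mem_prod.mpr ⟨?_, ?_⟩
          · -- a ∈ C'
            have : u.1 = a := Set.mem_singleton_iff.mp hu2'.1
            exact this ▸ hu1'.1
          · -- b ∈ {b'}
            have h1 : p.2 = b' := Set.mem_singleton_iff.mp hp1'.2
            have h2 : p.2 = b := Set.mem_singleton_iff.mp hp2'.2
            exact Set.mem_singleton_iff.mpr (h2.symm.trans h1)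
        · -- vertical member
          obtain ⟨u, hu1, hu2⟩ := hpair x hx xv hxv
          rw [heq] at hu1
          rw [hveq] at hu2
          obtain ⟨p, hp1, hp2⟩ := hpair x hx xh hxh
          rw [heq] at hp1
          rw [hheq] at hp2
          have hu1' := Set.mem_prod.mp hu1
          have hu2' := Set.mem_prod.mp hu2
          have hp1' := Set.mem_prod.mp hp1
          have hp2' := Set.mem_prod.mp hp2
          rw [heq]
          refine Set.mem_prod.mpr ⟨?_, ?_⟩
          · -- a ∈ {a'}
            have h1 : u.1 = a' := Set.mem_singleton_iff.mp hu1'.1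
            have h2 : u.1 = a := Set.mem_singleton_iff.mp hu2'.1
            exact Set.mem_singleton_iff.mpr (h2.symm.trans h1)
          · -- b ∈ D'
            have : p.2 = b := Set.mem_singleton_iff.mp hp2'.2
            exact this ▸ hp1'.2
      · -- all vertical
        have hall : ∀ x ∈ Q, ∃ a D, IsMaxClique G₂ D ∧
            (↑x : Set (V₁ × V₂)) = ({a} : Set V₁) ×ˢ D := by
          intro x hx
          rcases maxClique_structure_s19 (hmem x) with ⟨C, b, hC, heq⟩ | h
          · exact absurd ⟨x, hx, C, b, hC, heq⟩ hhoriz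
          · exact h
        obtain ⟨x₀, hx₀⟩ := hQne
        obtain ⟨a₀, D₀, hD₀, heq₀⟩ := hall x₀ hx₀
        have hsame : ∀ x ∈ Q, ∃ D, IsMaxClique G₂ D ∧
            (↑x : Set (V₁ × V₂)) = ({a₀} : Set V₁) ×ˢ D := by
          intro x hx
          obtain ⟨a, D, hD, heq⟩ := hall x hx
          obtain ⟨w, hw1, hw2⟩ := hpair x hx x₀ hx₀
          rw [heq] at hw1
          rw [heq₀] at hw2
          have h1 : w.1 = a := Set.mem_singleton_iff.mp (Set.mem_prod.mp hw1).1
          have h2 : w.1 = a₀ := Set.mem_singleton_iff.mp (Set.mem_prod.mp hw2).1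
          exact ⟨D, hD, by rw [heq, h1.symm.trans h2]⟩
        set F : Set (Set V₂) := {D | IsMaxClique G₂ D ∧
          ∃ x ∈ Q, (↑x : Set (V₁ × V₂)) = ({a₀} : Set V₁) ×ˢ D} with hFdef
        have hFne : F.Nonempty := ⟨D₀, hD₀, x₀, hx₀, heq₀⟩
        have hFmax : ∀ D ∈ F, D ∈ maxCliques G₂ := fun D hD => hD.1
        have hFpair : ∀ D ∈ F, ∀ D' ∈ F, (D ∩ D').Nonempty := by
          rintro D ⟨hD, x, hx, heq⟩ D' ⟨hD', x', hx', heq'⟩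
          obtain ⟨w, hw1, hw2⟩ := hpair x hx x' hx'
          rw [heq] at hw1
          rw [heq'] at hw2
          exact ⟨w.2, (Set.mem_prod.mp hw1).2, (Set.mem_prod.mp hw2).2⟩
        obtain ⟨b, hb⟩ := hH₂ F hFne hFmax hFpair
        rw [Set.mem_iInter₂] at hb
        refine ⟨(a₀, b), ?_⟩
        intro x hx
        obtain ⟨D, hD, heq⟩ := hsame x hx
        rw [heq]
        exact Set.mem_prod.mpr ⟨rfl, hb D ⟨hD, x, hx, heq⟩⟩
    · -- all horizontal
      have hall : ∀ x ∈ Q, ∃ C b, IsMaxClique G₁ C ∧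
          (↑x : Set (V₁ × V₂)) = C ×ˢ ({b} : Set V₂) := by
        intro x hx
        rcases maxClique_structure_s19 (hmem x) with h | ⟨a, D, hD, heq⟩
        · exact h
        · exact absurd ⟨x, hx, a, D, hD, heq⟩ hvert
      obtain ⟨x₀, hx₀⟩ := hQne
      obtain ⟨C₀, b₀, hC₀, heq₀⟩ := hall x₀ hx₀
      have hsame : ∀ x ∈ Q, ∃ C, IsMaxClique G₁ C ∧
          (↑x : Set (V₁ × V₂)) = C ×ˢ ({b₀} : Set V₂) := by
        intro x hx
        obtain ⟨C, b, hC, heq⟩ := hall x hx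
        obtain ⟨w, hw1, hw2⟩ := hpair x hx x₀ hx₀
        rw [heq] at hw1
        rw [heq₀] at hw2
        have h1 : w.2 = b := Set.mem_singleton_iff.mp (Set.mem_prod.mp hw1).2
        have h2 : w.2 = b₀ := Set.mem_singleton_iff.mp (Set.mem_prod.mp hw2).2
        exact ⟨C, hC, by rw [heq, h1.symm.trans h2]⟩
      set F : Set (Set V₁) := {C | IsMaxClique G₁ C ∧
        ∃ x ∈ Q, (↑x : Set (V₁ × V₂)) = C ×ˢ ({b₀} : Set V₂)} with hFdef
      have hFne : F.Nonempty := ⟨C₀, hC₀, x₀, hx₀, heq₀⟩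
      have hFmax : ∀ C ∈ F, C ∈ maxCliques G₁ := fun C hC => hC.1
      have hFpair : ∀ C ∈ F, ∀ C' ∈ F, (C ∩ C').Nonempty := by
        rintro C ⟨hC, x, hx, heq⟩ C' ⟨hC', x', hx', heq'⟩
        obtain ⟨w, hw1, hw2⟩ := hpair x hx x' hx'
        rw [heq] at hw1
        rw [heq'] at hw2
        exact ⟨w.1, (Set.mem_prod.mp hw1).1, (Set.mem_prod.mp hw2).1⟩
      obtain ⟨a, ha⟩ := hH₁ F hFne hFmax hFpair
      rw [Set.mem_iInter₂] at ha
      refine ⟨(a, b₀), ?_⟩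
      intro x hx
      obtain ⟨C, hC, heq⟩ := hsame x hx
      rw [heq]
      exact Set.mem_prod.mpr ⟨ha C ⟨hC, x, hx, heq⟩, rfl⟩
  obtain ⟨v, hv⟩ := hexist
  -- uniqueness
  have huniq : ∀ w : V₁ × V₂, (∀ x ∈ Q, w ∈ (↑x : Set (V₁ × V₂))) → w = v := by
    intro w hw
    by_contra hne
    obtain ⟨x₀, hx₀⟩ := hQne
    have hadj := (hmem x₀).1 (hw x₀ hx₀) (hv x₀ hx₀) hne
    rw [boxProd_adj] at hadj
    rcases hadj with ⟨h1, h2⟩ | ⟨h1, h2⟩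
    · -- w.1 ≠ v.1 : insert the vertical clique through w
      obtain ⟨D, hD, hbD⟩ := exists_isMaxClique_superset G₂
        (show G₂.IsClique {w.2} by simp [SimpleGraph.isClique_iff])
      have hVt := isMaxClique_vert (G₁ := G₁) hiso₂ hD w.1
      have hRmem : (({w.1} : Set V₁) ×ˢ D) ∈ maxCliques (G₁ □ G₂) := hVt
      set R : ↥(maxCliques (G₁ □ G₂)) := ⟨({w.1} : Set V₁) ×ˢ D, hRmem⟩ with hRdef
      have hwR : w ∈ (↑R : Set (V₁ × V₂)) :=
        Set.mem_prod.mpr ⟨rfl, hbD (Set.mem_singleton _)⟩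
      have key : ∀ z ∈ Q, z ≠ R → (cliqueGraph (G₁ □ G₂)).Adj R z := by
        intro z hz hzne
        exact show R ≠ z ∧ ((R : Set (V₁ × V₂)) ∩ z).Nonempty from ⟨hzne.symm, ⟨w, hwR, hw z hz⟩⟩
      have hcl : (cliqueGraph (G₁ □ G₂)).IsClique (insert R Q) := by
        intro x hx y hy hxy
        rw [Set.mem_insert_iff] at hx hy
        rcases hx with rfl | hx <;> rcases hy with rfl | hy
        · exact absurd rfl hxy
        · exact key y hy hxy.symm
        · exact (key x hx hxy).symm
        · exact hQ.1 hx hy hxy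
      have hQeq := hQ.2 _ hcl (Set.subset_insert _ _)
      have hRQ : R ∈ Q := by
        rw [hQeq]
        exact Set.mem_insert _ _
      have hv1 : v.1 = w.1 := Set.mem_singleton_iff.mp (Set.mem_prod.mp (hv R hRQ)).1
      exact h1.ne hv1.symm
    · -- w.2 ≠ v.2 : insert the horizontal clique through w
      obtain ⟨C, hC, hbC⟩ := exists_isMaxClique_superset G₁
        (show G₁.IsClique {w.1} by simp [SimpleGraph.isClique_iff])
      have hHz := isMaxClique_horiz (G₂ := G₂) hiso₁ hC w.2
      have hRmem : (C ×ˢ ({w.2} : Set V₂)) ∈ maxCliques (G₁ □ G₂) := hHz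
      set R : ↥(maxCliques (G₁ □ G₂)) := ⟨C ×ˢ ({w.2} : Set V₂), hRmem⟩ with hRdef
      have hwR : w ∈ (↑R : Set (V₁ × V₂)) :=
        Set.mem_prod.mpr ⟨hbC (Set.mem_singleton _), rfl⟩
      have key : ∀ z ∈ Q, z ≠ R → (cliqueGraph (G₁ □ G₂)).Adj R z := by
        intro z hz hzne
        exact show R ≠ z ∧ ((R : Set (V₁ × V₂)) ∩ z).Nonempty from ⟨hzne.symm, ⟨w, hwR, hw z hz⟩⟩
      have hcl : (cliqueGraph (G₁ □ G₂)).IsClique (insert R Q) := by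
        intro x hx y hy hxy
        rw [Set.mem_insert_iff] at hx hy
        rcases hx with rfl | hx <;> rcases hy with rfl | hy
        · exact absurd rfl hxy
        · exact key y hy hxy.symm
        · exact (key x hx hxy).symm
        · exact hQ.1 hx hy hxy
      have hQeq := hQ.2 _ hcl (Set.subset_insert _ _)
      have hRQ : R ∈ Q := by
        rw [hQeq]
        exact Set.mem_insert _ _
      have hv2 : v.2 = w.2 := Set.mem_singleton_iff.mp (Set.mem_prod.mp (hv R hRQ)).2
      exact h1.ne hv2.symm
  refine ⟨v, ?_⟩
  ext z
  rw [Set.mem_iInter₂, Set.mem_singleton_iff]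
  constructor
  · exact fun h => huniq z h
  · rintro rfl
    exact hv
end
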